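/- Let Π_A be an observable on ℂ^D with Tr(Π_A) > 0, set ρ_A := Π_A / Tr(Π_A) and ⟨Π_A⟩ := Tr(Π_A)/D. Let w₊ be a completely positive weight, W ∈ (0,1), and ΔE_W > 0 with w̃₊(δE) > W for all |δE| < ΔE_W, and suppose |∫_ℝ w₊(t) · Tr(ρ_A(t) Π_A) dt − ⟨Π_A⟩| < ε_A for some ε_A > 0. Then for every weight function w with |w̃(δE)| ≤ w₀ for all |δE| ≥ ΔE_W, where w₀ ≥ 0, one has |∫_ℝ w(t) · Tr(ρ_A(t) Π_A) dt − ⟨Π_A⟩| < w₀ + ε_A / W. -/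

import Mathlib

open MeasureTheory Filter
open scoped ComplexOrder

namespace QET

variable {D : ℕ}

/-- `exp(-itH)` for the Hamiltonian `H = Σ_n (E n) • P_n`, where `P_n` is the orthogonal
projection onto the `n`-th vector of the fixed orthonormal eigenbasis `e`.  All operators are
written as matrices in this eigenbasis, so `H` is diagonal and
`exp(-itH) = diag (exp (-i t E n))`. -/
noncomputable def U (E : Fin D → ℝ) (t : ℝ) : Matrix (Fin D) (Fin D) ℂ :=
  Matrix.diagonal fun n => Complex.exp (-(Complex.I) * t * (E n))

/-- Time evolution `X(t) = exp(-itH) · X · exp(itH)`. -/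
noncomputable def evolve (E : Fin D → ℝ) (t : ℝ) (X : Matrix (Fin D) (Fin D) ℂ) :
    Matrix (Fin D) (Fin D) ℂ :=
  U E t * X * U E (-t)

/-- A state: a positive semidefinite operator with unit trace. -/
def IsState (ρ : Matrix (Fin D) (Fin D) ℂ) : Prop :=
  ρ.PosSemidef ∧ ρ.trace = 1

/-- An observable: an orthogonal projection (Hermitian idempotent). -/
def IsObservable (P : Matrix (Fin D) (Fin D) ℂ) : Prop :=
  P.IsHermitian ∧ P * P = P

/-- Orthogonal projection `Π_S` onto the energy shell spanned by `{e n : n ∈ S}`. -/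
noncomputable def shellProj (S : Finset (Fin D)) : Matrix (Fin D) (Fin D) ℂ :=
  Matrix.diagonal fun n => if n ∈ S then 1 else 0

/-- A state is supported on the shell of `S`: `Π_S ρ Π_S = ρ`. -/
def SupportedOn (S : Finset (Fin D)) (ρ : Matrix (Fin D) (Fin D) ℂ) : Prop :=
  shellProj S * ρ * shellProj S = ρ

/-- Thermal value `⟨P⟩_S = Tr(P Π_S)/d` (a real number: trace of Hermitian products below). -/
noncomputable def thermVal (S : Finset (Fin D)) (P : Matrix (Fin D) (Fin D) ℂ) : ℝ :=
  (P * shellProj S).trace.re / S.card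

/-- Fourier transform `w̃(E) = ∫ w(t) exp(-iEt) dt` of a weight function. -/
noncomputable def fourier (w : ℝ → ℝ) (En : ℝ) : ℂ :=
  ∫ t : ℝ, (w t : ℂ) * Complex.exp (-(Complex.I) * En * t)

/-- A weight function: integrable, nonnegative, normalized to `∫ w = 1`. -/
structure IsWeight (w : ℝ → ℝ) : Prop where
  integrable : Integrable w
  nonneg : ∀ t, 0 ≤ w t
  normalized : (∫ t : ℝ, w t) = 1

/-- A completely positive weight: a weight function whose Fourier transform is a
nonnegative real number everywhere. -/
structure IsCPWeight (w : ℝ → ℝ) extends IsWeight w : Prop where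
  fourier_im : ∀ En : ℝ, (fourier w En).im = 0
  fourier_nonneg : ∀ En : ℝ, 0 ≤ (fourier w En).re

private lemma exp_im_abs (x t : ℝ) :
    ‖Complex.exp (-(Complex.I) * x * t)‖ = 1 := by
  rw [Complex.norm_exp]
  convert Real.exp_zero using 2
  simp [Complex.mul_re]

private lemma weight_mul_exp_integrable {w : ℝ → ℝ} (hw : IsWeight w) (x : ℝ) :
    Integrable fun t : ℝ => (w t : ℂ) * Complex.exp (-(Complex.I) * x * t) := by
  have h1 : Integrable fun t : ℝ => ((w t : ℂ)) := hw.integrable.ofReal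
  have hc : Continuous fun t : ℝ => Complex.exp (-(Complex.I) * x * t) := by fun_prop
  have h2 := h1.bdd_mul hc.aestronglyMeasurable
    (Eventually.of_forall fun t => le_of_eq (exp_im_abs x t))
  simpa [mul_comm] using h2

private lemma fourier_zero {w : ℝ → ℝ} (hw : IsWeight w) : fourier w 0 = 1 := by
  unfold fourier
  simp only [Complex.ofReal_zero, mul_zero, zero_mul, Complex.exp_zero, mul_one]
  have h := integral_ofReal (𝕜 := ℂ) (f := w) (μ := (volume : Measure ℝ))
  exact h.trans (by rw [hw.normalized]; norm_num)

private lemma fourier_abs_le_one {w : ℝ → ℝ} (hw : IsWeight w) (x : ℝ) :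
    ‖fourier w x‖ ≤ 1 := by
  have h := norm_integral_le_integral_norm (μ := (volume : Measure ℝ))
    (f := fun t : ℝ => (w t : ℂ) * Complex.exp (-(Complex.I) * x * t))
  have h2 : (∫ t : ℝ, ‖(w t : ℂ) * Complex.exp (-(Complex.I) * x * t)‖) = ∫ t : ℝ, w t := by
    congr 1; funext t
    rw [norm_mul, exp_im_abs, mul_one,
      Complex.norm_real, Real.norm_eq_abs, abs_of_nonneg (hw.nonneg t)]
  rw [h2, hw.normalized] at h
  exact h

private lemma avg_formula {D : ℕ} (E : Fin D → ℝ) (PiA : Matrix (Fin D) (Fin D) ℂ)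
    {w : ℝ → ℝ} (hw : IsWeight w) (z : ℂ) :
    (∫ t : ℝ, (w t : ℂ) * (evolve E t (z • PiA) * PiA).trace)
      = ∑ n : Fin D, ∑ m : Fin D,
          z * (PiA n m * PiA m n) * fourier w (E n - E m) := by
  have hpt : ∀ t : ℝ, (w t : ℂ) * (evolve E t (z • PiA) * PiA).trace
      = ∑ n : Fin D, ∑ m : Fin D,
          z * (PiA n m * PiA m n) *
            ((w t : ℂ) * Complex.exp (-(Complex.I) * ((E n - E m : ℝ) : ℂ) * t)) := by
    intro t
    simp only [evolve, U, Matrix.trace, Matrix.diag, Matrix.mul_apply,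
      Matrix.diagonal_apply, Matrix.smul_apply, smul_eq_mul, ite_mul, mul_ite,
      zero_mul, mul_zero, Finset.sum_ite_eq, Finset.sum_ite_eq', Finset.mem_univ,
      if_true, Finset.mul_sum]
    refine Finset.sum_congr rfl fun n _ => Finset.sum_congr rfl fun m _ => ?_
    have hexp : Complex.exp (-(Complex.I) * t * E n) *
          Complex.exp (-(Complex.I) * ((-t : ℝ) : ℂ) * E m)
        = Complex.exp (-(Complex.I) * ((E n - E m : ℝ) : ℂ) * t) := by
      rw [← Complex.exp_add]; congr 1; push_cast; ring
    rw [← hexp]; ring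
  have hint : ∀ n m : Fin D, Integrable (fun t : ℝ =>
      z * (PiA n m * PiA m n) *
        ((w t : ℂ) * Complex.exp (-(Complex.I) * ((E n - E m : ℝ) : ℂ) * t))) := by
    intro n m
    exact (weight_mul_exp_integrable hw (E n - E m)).const_mul _
  calc (∫ t : ℝ, (w t : ℂ) * (evolve E t (z • PiA) * PiA).trace)
      = ∫ t : ℝ, ∑ n : Fin D, ∑ m : Fin D,
          z * (PiA n m * PiA m n) *
            ((w t : ℂ) * Complex.exp (-(Complex.I) * ((E n - E m : ℝ) : ℂ) * t)) :=
        integral_congr_ae (Eventually.of_forall hpt)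
    _ = ∑ n : Fin D, ∑ m : Fin D,
          z * (PiA n m * PiA m n) * fourier w (E n - E m) := by
        rw [integral_finset_sum _ (fun n _ => integrable_finset_sum _ (fun m _ => hint n m))]
        refine Finset.sum_congr rfl fun n _ => ?_
        rw [integral_finset_sum _ (fun m _ => hint n m)]
        refine Finset.sum_congr rfl fun m _ => ?_
        rw [MeasureTheory.integral_const_mul]
        rfl

private lemma herm_prod {D : ℕ} {PiA : Matrix (Fin D) (Fin D) ℂ}
    (h : PiA.IsHermitian) (n m : Fin D) :
    PiA n m * PiA m n = ((‖PiA n m‖ ^ 2 : ℝ) : ℂ) := by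
  rw [← h.apply m n, Complex.sq_norm]
  exact Complex.mul_conj _

private lemma sum_split {α M : Type*} [Fintype α] [AddCommMonoid M] (P0 P1 : α → Prop)
    [DecidablePred P0] [DecidablePred P1] (himp : ∀ a, P0 a → P1 a) (f : α → M) :
    ∑ a, f a = ∑ a ∈ Finset.univ.filter (fun a => P0 a), f a
      + ∑ a ∈ Finset.univ.filter (fun a => ¬ P0 a ∧ P1 a), f a
      + ∑ a ∈ Finset.univ.filter (fun a => ¬ P1 a), f a := by
  classical
  rw [← Finset.sum_filter_add_sum_filter_not Finset.univ (fun a => P1 a) f]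
  congr 1
  rw [← Finset.sum_filter_add_sum_filter_not (Finset.univ.filter (fun a => P1 a))
    (fun a => P0 a) f]
  congr 1
  · congr 1; ext a; simp only [Finset.mem_filter, Finset.mem_univ, true_and]
    exact ⟨fun h => h.2, fun h => ⟨himp a h, h⟩⟩
  · congr 1; ext a; simp only [Finset.mem_filter, Finset.mem_univ, true_and]
    tauto

/-- The matrix element `⟨e n, (P - ⟨P⟩_S · 1) e m⟩ = ⟨e n, P e m⟩ - ⟨P⟩_S δ_{nm}`. -/
noncomputable def devEl (S : Finset (Fin D)) (P : Matrix (Fin D) (Fin D) ℂ)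
    (n m : Fin D) : ℂ :=
  P n m - if n = m then (thermVal S P : ℂ) else 0

/-- Band variance `Σ_{n,m ∈ S, |E n - E m| < ΔE} |⟨e n, P e m⟩ - ⟨P⟩_S δ_{nm}|²`. -/
noncomputable def bandVar (S : Finset (Fin D)) (E : Fin D → ℝ) (ΔE : ℝ)
    (P : Matrix (Fin D) (Fin D) ℂ) : ℝ :=
  ∑ n ∈ S, ∑ m ∈ S,
    if |E n - E m| < ΔE then ‖devEl S P n m‖ ^ 2 else 0

/-- Energy-band thermalization in the shell `S` with bandwidth `ΔE` and accuracy `ε`. -/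
def EnergyBandTherm (S : Finset (Fin D)) (E : Fin D → ℝ) (ΔE ε : ℝ)
    (P : Matrix (Fin D) (Fin D) ℂ) : Prop :=
  (1 / (S.card : ℝ)) * bandVar S E ΔE P < ε ^ 2

/-- Expectation value `⟨v, P v⟩` of an operator in a vector. -/
noncomputable def expVal (P : Matrix (Fin D) (Fin D) ℂ) (v : Fin D → ℂ) : ℂ :=
  dotProduct (star v) (P.mulVec v)

set_option maxHeartbeats 1600000 in
/-- **Autocorrelator thermalization o.a. feeds forward to longer timescales.**
With `ρ_A := Π_A / Tr Π_A` and `⟨Π_A⟩ := Tr Π_A / D`, suppose the `w₊`-averaged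
autocorrelator is within `ε_A` of `⟨Π_A⟩`, where `w₊` is a completely positive weight with
`w̃₊(δE) > W` for `|δE| < ΔE_W` (`W ∈ (0,1)`, `ΔE_W > 0`).  Then for every weight function
`w` with `|w̃(δE)| ≤ w₀` for all `|δE| ≥ ΔE_W`,
`|∫ w(t) Tr(ρ_A(t) Π_A) dt - ⟨Π_A⟩| < w₀ + ε_A / W`. -/
theorem autocorrelator_thermalization_feeds_forward
    {D : ℕ} (hD : 0 < D) (E : Fin D → ℝ)
    (PiA : Matrix (Fin D) (Fin D) ℂ) (hPiA : IsObservable PiA)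
    (htr : 0 < PiA.trace.re)
    (wp : ℝ → ℝ) (hwp : IsCPWeight wp)
    (W ΔEW : ℝ) (hW0 : 0 < W) (hW1 : W < 1) (hΔEW : 0 < ΔEW)
    (hWband : ∀ δE : ℝ, |δE| < ΔEW → W < (fourier wp δE).re)
    (εA : ℝ) (hεA : 0 < εA)
    (hauto : ‖
        ((∫ t : ℝ, (wp t : ℂ) *
            (evolve E t ((PiA.trace.re : ℂ)⁻¹ • PiA) * PiA).trace) -
          ((PiA.trace.re / D : ℝ) : ℂ))‖ < εA) :
    ∀ w : ℝ → ℝ, IsWeight w → ∀ w₀ : ℝ, 0 ≤ w₀ →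
      (∀ δE : ℝ, ΔEW ≤ |δE| → ‖fourier w δE‖ ≤ w₀) →
      ‖
          ((∫ t : ℝ, (w t : ℂ) *
              (evolve E t ((PiA.trace.re : ℂ)⁻¹ • PiA) * PiA).trace) -
            ((PiA.trace.re / D : ℝ) : ℂ))‖
        < w₀ + εA / W := by
  intro w hw w₀ hw₀ hwfar
  classical
  obtain ⟨hherm, hidem⟩ := hPiA
  set tr : ℝ := PiA.trace.re with htr_def
  set μ : ℝ := tr / (D : ℝ) with hμ_def
  set c : Fin D × Fin D → ℝ := fun p => ‖PiA p.1 p.2‖ ^ 2 / tr with hc_def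
  have hcnonneg : ∀ p, 0 ≤ c p := fun p => div_nonneg (by positivity) htr.le
  have hprod : ∀ n m, PiA n m * PiA m n = ((‖PiA n m‖ ^ 2 : ℝ) : ℂ) :=
    herm_prod hherm
  -- trace identity
  have htrace_eq : PiA.trace
      = ((∑ p : Fin D × Fin D, ‖PiA p.1 p.2‖ ^ 2 : ℝ) : ℂ) := by
    have hstep : (PiA * PiA).trace
        = ∑ n : Fin D, ∑ m : Fin D, ((‖PiA n m‖ ^ 2 : ℝ) : ℂ) := by
      simp only [Matrix.trace, Matrix.diag, Matrix.mul_apply]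
      exact Finset.sum_congr rfl fun n _ => Finset.sum_congr rfl fun m _ => hprod n m
    have h2 : (∑ p : Fin D × Fin D, ‖PiA p.1 p.2‖ ^ 2)
        = ∑ n : Fin D, ∑ m : Fin D, ‖PiA n m‖ ^ 2 :=
      Fintype.sum_prod_type (f := fun p => ‖PiA p.1 p.2‖ ^ 2)
    conv_lhs => rw [← hidem]
    rw [hstep, h2]
    norm_cast
  have htrsum : ∑ p : Fin D × Fin D, ‖PiA p.1 p.2‖ ^ 2 = tr := by
    rw [htr_def, htrace_eq, Complex.ofReal_re]
  have hcsum : ∑ p : Fin D × Fin D, c p = 1 := by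
    rw [hc_def, ← Finset.sum_div, htrsum, div_self (ne_of_gt htr)]
  -- averaged autocorrelator formula
  have havg : ∀ v : ℝ → ℝ, IsWeight v →
      (∫ t : ℝ, (v t : ℂ) * (evolve E t ((tr : ℂ)⁻¹ • PiA) * PiA).trace)
        = ∑ p : Fin D × Fin D, (c p : ℂ) * fourier v (E p.1 - E p.2) := by
    intro v hv
    rw [avg_formula E PiA hv,
      show (∑ p : Fin D × Fin D, ((c p : ℝ) : ℂ) * fourier v (E p.1 - E p.2))
          = ∑ n : Fin D, ∑ m : Fin D, ((c (n, m) : ℝ) : ℂ) * fourier v (E n - E m)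
        from Fintype.sum_prod_type
          (f := fun p => ((c p : ℝ) : ℂ) * fourier v (E p.1 - E p.2))]
    refine Finset.sum_congr rfl fun n _ => Finset.sum_congr rfl fun m _ => ?_
    rw [hprod n m]
    simp only [hc_def]
    push_cast
    ring
  -- partition of pairs
  set P0 : Fin D × Fin D → Prop := fun p => E p.1 - E p.2 = 0 with hP0_def
  set P1 : Fin D × Fin D → Prop := fun p => |E p.1 - E p.2| < ΔEW with hP1_def
  have himp : ∀ p, P0 p → P1 p := by
    intro p h
    have h' : E p.1 - E p.2 = 0 := h
    show |E p.1 - E p.2| < ΔEW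
    rw [h', abs_zero]
    exact hΔEW
  set A : Finset (Fin D × Fin D) := Finset.univ.filter (fun p => P0 p) with hA_def
  set B : Finset (Fin D × Fin D) := Finset.univ.filter (fun p => ¬ P0 p ∧ P1 p) with hB_def
  set Cs : Finset (Fin D × Fin D) := Finset.univ.filter (fun p => ¬ P1 p) with hCs_def
  set s0 : ℝ := ∑ p ∈ A, c p with hs0_def
  set s1 : ℝ := ∑ p ∈ B, c p with hs1_def
  set s2 : ℝ := ∑ p ∈ Cs, c p with hs2_def
  have hs0nn : 0 ≤ s0 := Finset.sum_nonneg fun p _ => hcnonneg p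
  have hs1nn : 0 ≤ s1 := Finset.sum_nonneg fun p _ => hcnonneg p
  have hs2nn : 0 ≤ s2 := Finset.sum_nonneg fun p _ => hcnonneg p
  have hsum012 : s0 + s1 + s2 = 1 := by
    rw [hs0_def, hs1_def, hs2_def, hA_def, hB_def, hCs_def, ← sum_split P0 P1 himp c, hcsum]
  -- diagonal bound : μ ≤ s0
  have hre : ∀ n, ‖PiA n n‖ ^ 2 = (PiA n n).re ^ 2 := by
    intro n
    have h1 : (starRingEnd ℂ) (PiA n n) = PiA n n := hherm.apply n n
    have h2 : PiA n n = ((PiA n n).re : ℂ) := (Complex.conj_eq_iff_re.mp h1).symm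
    conv_lhs => rw [h2]
    rw [Complex.norm_real, Real.norm_eq_abs, sq_abs]
  have htrace_re : tr = ∑ n : Fin D, (PiA n n).re := by
    rw [htr_def]
    simp [Matrix.trace, Matrix.diag, Complex.re_sum]
  have hCS : (∑ n : Fin D, (PiA n n).re) ^ 2
      ≤ (D : ℝ) * ∑ n : Fin D, (PiA n n).re ^ 2 := by
    have := sq_sum_le_card_mul_sum_sq (s := (Finset.univ : Finset (Fin D)))
      (f := fun n => (PiA n n).re)
    simpa using this
  have hdiag_sum : ∑ n : Fin D, c (n, n) = (∑ n : Fin D, (PiA n n).re ^ 2) / tr := by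
    rw [hc_def, ← Finset.sum_div]
    congr 1
    exact Finset.sum_congr rfl fun n _ => hre n
  have hμ_le_diag : μ ≤ ∑ n : Fin D, c (n, n) := by
    rw [hμ_def, hdiag_sum, div_le_div_iff₀ (by exact_mod_cast hD) htr]
    calc tr * tr = tr ^ 2 := by ring
      _ ≤ (D : ℝ) * ∑ n : Fin D, (PiA n n).re ^ 2 := by rw [htrace_re]; exact hCS
      _ = (∑ n : Fin D, (PiA n n).re ^ 2) * (D : ℝ) := by ring
  have hdiag_le_s0 : ∑ n : Fin D, c (n, n) ≤ s0 := by
    have himage : ∑ n : Fin D, c (n, n)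
        = ∑ p ∈ Finset.univ.image (fun n : Fin D => (n, n)), c p :=
      (Finset.sum_image (fun x _ y _ h => (Prod.ext_iff.mp h).1)).symm
    rw [himage, hs0_def]
    apply Finset.sum_le_sum_of_subset_of_nonneg
    · intro p hp
      simp only [Finset.mem_image, Finset.mem_univ, true_and] at hp
      obtain ⟨n, rfl⟩ := hp
      rw [hA_def]
      simp only [Finset.mem_filter, Finset.mem_univ, true_and, hP0_def]
      exact sub_self _
    · intro p _ _
      exact hcnonneg p
  have hμ_le_s0 : μ ≤ s0 := le_trans hμ_le_diag hdiag_le_s0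
  -- the wp-average is real
  have hwpreal : ∀ x : ℝ, fourier wp x = (((fourier wp x).re : ℝ) : ℂ) := by
    intro x
    exact Complex.ext (by simp) (by simp [hwp.fourier_im x])
  set ap : ℝ := ∑ p : Fin D × Fin D, c p * (fourier wp (E p.1 - E p.2)).re with hap_def
  have hap_eq : (∑ p : Fin D × Fin D, (c p : ℂ) * fourier wp (E p.1 - E p.2))
      = ((ap : ℝ) : ℂ) := by
    rw [hap_def]
    push_cast
    exact Finset.sum_congr rfl fun p _ => by conv_lhs => rw [hwpreal (E p.1 - E p.2)]
  have hauto' : |ap - μ| < εA := by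
    rw [havg wp hwp.toIsWeight, hap_eq] at hauto
    have heq : ((ap : ℝ) : ℂ) - ((μ : ℝ) : ℂ) = ((ap - μ : ℝ) : ℂ) := by push_cast; ring
    rw [heq] at hauto
    rwa [Complex.norm_real, Real.norm_eq_abs] at hauto
  -- lower bound on ap
  have hap_lower : s0 + W * s1 ≤ ap := by
    rw [hap_def, sum_split P0 P1 himp (fun p => c p * (fourier wp (E p.1 - E p.2)).re)]
    have hA_part : ∑ p ∈ A, c p * (fourier wp (E p.1 - E p.2)).re = s0 := by
      rw [hs0_def]
      refine Finset.sum_congr rfl fun p hp => ?_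
      rw [hA_def] at hp
      simp only [Finset.mem_filter, Finset.mem_univ, true_and, hP0_def] at hp
      rw [hp, fourier_zero hwp.toIsWeight]
      simp
    have hB_part : W * s1 ≤ ∑ p ∈ B, c p * (fourier wp (E p.1 - E p.2)).re := by
      rw [hs1_def, Finset.mul_sum]
      refine Finset.sum_le_sum fun p hp => ?_
      rw [hB_def] at hp
      simp only [Finset.mem_filter, Finset.mem_univ, true_and, hP1_def] at hp
      rw [mul_comm (W) (c p)]
      exact mul_le_mul_of_nonneg_left (le_of_lt (hWband _ hp.2)) (hcnonneg p)
    have hC_part : 0 ≤ ∑ p ∈ Cs, c p * (fourier wp (E p.1 - E p.2)).re :=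
      Finset.sum_nonneg fun p _ => mul_nonneg (hcnonneg p) (hwp.fourier_nonneg _)
    rw [← hA_def, ← hB_def, ← hCs_def]
    linarith [hA_part, hB_part, hC_part]
  -- key bound
  have hkey : s0 + s1 - μ < εA / W := by
    have h1 : ap - μ < εA := (abs_lt.mp hauto').2
    have h2 : W * (s0 + s1 - μ) ≤ ap - μ := by
      nlinarith [mul_nonneg (by linarith : (0:ℝ) ≤ 1 - W) (by linarith : (0:ℝ) ≤ s0 - μ)]
    rw [lt_div_iff₀ hW0]
    nlinarith [h2, h1]
  -- upper bound on the w-average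
  rw [havg w hw]
  rw [sum_split P0 P1 himp (fun p => (c p : ℂ) * fourier w (E p.1 - E p.2)),
    ← hA_def, ← hB_def, ← hCs_def]
  have hA_w : ∑ p ∈ A, (c p : ℂ) * fourier w (E p.1 - E p.2) = ((s0 : ℝ) : ℂ) := by
    rw [hs0_def]
    push_cast
    refine Finset.sum_congr rfl fun p hp => ?_
    rw [hA_def] at hp
    simp only [Finset.mem_filter, Finset.mem_univ, true_and, hP0_def] at hp
    rw [hp, fourier_zero hw, mul_one]
  have hB_w : ‖∑ p ∈ B, (c p : ℂ) * fourier w (E p.1 - E p.2)‖ ≤ s1 := by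
    rw [hs1_def]
    calc ‖∑ p ∈ B, (c p : ℂ) * fourier w (E p.1 - E p.2)‖
        ≤ ∑ p ∈ B, ‖(c p : ℂ) * fourier w (E p.1 - E p.2)‖ := by
          simpa using
            norm_sum_le B (fun p => (c p : ℂ) * fourier w (E p.1 - E p.2))
      _ ≤ ∑ p ∈ B, c p := by
          refine Finset.sum_le_sum fun p _ => ?_
          rw [norm_mul, Complex.norm_real, Real.norm_eq_abs, abs_of_nonneg (hcnonneg p)]
          exact mul_le_of_le_one_right (hcnonneg p) (fourier_abs_le_one hw _)
  have hC_w : ‖∑ p ∈ Cs, (c p : ℂ) * fourier w (E p.1 - E p.2)‖ ≤ s2 * w₀ := by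
    rw [hs2_def, Finset.sum_mul]
    calc ‖∑ p ∈ Cs, (c p : ℂ) * fourier w (E p.1 - E p.2)‖
        ≤ ∑ p ∈ Cs, ‖(c p : ℂ) * fourier w (E p.1 - E p.2)‖ := by
          simpa using
            norm_sum_le Cs (fun p => (c p : ℂ) * fourier w (E p.1 - E p.2))
      _ ≤ ∑ p ∈ Cs, c p * w₀ := by
          refine Finset.sum_le_sum fun p hp => ?_
          rw [norm_mul, Complex.norm_real, Real.norm_eq_abs, abs_of_nonneg (hcnonneg p)]
          refine mul_le_mul_of_nonneg_left ?_ (hcnonneg p)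
          refine hwfar _ ?_
          rw [hCs_def] at hp
          simp only [Finset.mem_filter, Finset.mem_univ, true_and, hP1_def] at hp
          exact not_lt.mp hp
  rw [hA_w]
  have hrearr : ((s0 : ℝ) : ℂ) + (∑ p ∈ B, (c p : ℂ) * fourier w (E p.1 - E p.2))
        + (∑ p ∈ Cs, (c p : ℂ) * fourier w (E p.1 - E p.2)) - ((μ : ℝ) : ℂ)
      = ((s0 - μ : ℝ) : ℂ) + (∑ p ∈ B, (c p : ℂ) * fourier w (E p.1 - E p.2))
        + (∑ p ∈ Cs, (c p : ℂ) * fourier w (E p.1 - E p.2)) := by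
    push_cast; ring
  rw [hrearr]
  calc ‖((s0 - μ : ℝ) : ℂ) + (∑ p ∈ B, (c p : ℂ) * fourier w (E p.1 - E p.2))
        + (∑ p ∈ Cs, (c p : ℂ) * fourier w (E p.1 - E p.2))‖
      ≤ ‖((s0 - μ : ℝ) : ℂ)‖ + ‖∑ p ∈ B, (c p : ℂ) * fourier w (E p.1 - E p.2)‖
        + ‖∑ p ∈ Cs, (c p : ℂ) * fourier w (E p.1 - E p.2)‖ := by
        calc ‖((s0 - μ : ℝ) : ℂ) + (∑ p ∈ B, (c p : ℂ) * fourier w (E p.1 - E p.2))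
              + (∑ p ∈ Cs, (c p : ℂ) * fourier w (E p.1 - E p.2))‖
            ≤ ‖((s0 - μ : ℝ) : ℂ) + (∑ p ∈ B, (c p : ℂ) * fourier w (E p.1 - E p.2))‖
              + ‖∑ p ∈ Cs, (c p : ℂ) * fourier w (E p.1 - E p.2)‖ :=
            norm_add_le _ _
          _ ≤ _ := by gcongr; exact norm_add_le _ _
    _ ≤ (s0 - μ) + s1 + s2 * w₀ := by
        rw [Complex.norm_real, Real.norm_eq_abs, abs_of_nonneg (by linarith)]
        gcongr
    _ < w₀ + εA / W := by
        have hs2le : s2 ≤ 1 := by linarith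
        nlinarith [mul_nonneg hw₀ (sub_nonneg.mpr hs2le), hkey]


end QET
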